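/- Let E_k denote elementary symmetric polynomials and S_k(n) = E_k(1, x, …, x^{n−1}) ∈ ℤ[x]. Then for all 1 ≤ k ≤ n, S_k(n) = x^{k(k−1)/2} · ∏_{ℓ=1}^{k} (x^{n−ℓ+1} − 1) / Φ_ℓ(x)^{⌊k/ℓ⌋}, where Φ_ℓ is the ℓ-th cyclotomic polynomial (in particular, the right-hand side is a polynomial). -/

import Mathlib

open Polynomial Finset

-- esymm recursion
lemma esymm_cons {R : Type*} [CommSemiring R] (a : R) (s : Multiset R) (k : ℕ) :
    (a ::ₘ s).esymm (k + 1) = s.esymm (k + 1) + a * s.esymm k := by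
  simp only [Multiset.esymm, Multiset.powersetCard_cons, Multiset.map_add, Multiset.sum_add,
    Multiset.map_map, Function.comp, Multiset.prod_cons]
  rw [Multiset.sum_map_mul_left]

noncomputable def S (n k : ℕ) : ℤ[X] := ((Multiset.range n).map fun i => (X : ℤ[X]) ^ i).esymm k

lemma S_zero (n : ℕ) : S n 0 = 1 := by simp [S, Multiset.esymm]

lemma S_succ (n k : ℕ) : S (n + 1) (k + 1) = S n (k + 1) + X ^ n * S n k := by
  rw [S, Multiset.range_succ, Multiset.map_cons, esymm_cons]; rfl

lemma S_overflow (n k : ℕ) (h : n < k) : S n k = 0 := by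
  rw [S, Multiset.esymm, Multiset.powersetCard_eq_empty]
  · rfl
  · simpa using h

noncomputable def Q (n k : ℕ) : ℤ[X] := ∏ i ∈ range k, ((X : ℤ[X]) ^ (n - i) - 1)
noncomputable def Rk (k : ℕ) : ℤ[X] := ∏ i ∈ range k, ((X : ℤ[X]) ^ (i + 1) - 1)

lemma Q_succ_top (n k : ℕ) : Q n (k + 1) = Q n k * (X ^ (n - k) - 1) := prod_range_succ _ _
lemma Q_succ_bot (n k : ℕ) : Q (n + 1) (k + 1) = (X ^ (n + 1) - 1) * Q n k := by
  rw [Q, prod_range_succ', Nat.sub_zero, mul_comm]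
  congr 1
  exact prod_congr rfl fun i _ => by rw [Nat.succ_sub_succ]
lemma Rk_succ (k : ℕ) : Rk (k + 1) = Rk k * (X ^ (k + 1) - 1) := prod_range_succ _ _

lemma tri (j : ℕ) : (j + 1) * (j + 1 - 1) / 2 = j * (j - 1) / 2 + j := by
  rw [← Finset.sum_range_id, ← Finset.sum_range_id, Finset.sum_range_succ]

lemma key : ∀ n k, k ≤ n → S n k * Rk k = X ^ (k * (k - 1) / 2) * Q n k := by
  intro n
  induction n with
  | zero => intro k hk; interval_cases k; simp [S_zero, Rk, Q]
  | succ n ih =>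
    intro k hk
    match k with
    | 0 => simp [S_zero, Rk, Q]
    | j + 1 =>
      rw [S_succ, Rk_succ, add_mul, Q_succ_bot, tri]
      rcases Nat.lt_or_ge n (j + 1) with h | h
      · -- j = n
        obtain rfl : n = j := by omega
        have h2 := ih n le_rfl
        rw [S_overflow n (n + 1) (by omega), zero_mul, zero_add]
        linear_combination (X : ℤ[X]) ^ n * (X ^ (n + 1) - 1) * h2
      · -- j + 1 ≤ n
        obtain ⟨m, rfl⟩ : ∃ m, n = (j + 1) + m := ⟨n - (j + 1), by omega⟩
        have h1 := ih (j + 1) (by omega)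
        have h2 := ih j (by omega)
        have e1 : j + 1 + m - j = m + 1 := by omega
        rw [tri, Rk_succ, Q_succ_top, e1] at h1
        linear_combination h1 + ((X : ℤ[X]) ^ (j + 1) - 1) * X ^ (j + 1 + m) * h2

lemma cyc_prod (k : ℕ) :
    ∏ ℓ ∈ Finset.Icc 1 k, (cyclotomic ℓ ℤ) ^ (k / ℓ) =
      ∏ ℓ ∈ Finset.Icc 1 k, ((X : ℤ[X]) ^ ℓ - 1) := by
  have hdiv : ∀ ℓ ∈ Finset.Icc 1 k, Nat.divisors ℓ = {d ∈ Finset.Icc 1 k | d ∣ ℓ} := by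
    intro ℓ hℓ
    simp only [Finset.mem_Icc] at hℓ
    ext d
    simp only [Nat.mem_divisors, Finset.mem_filter, Finset.mem_Icc]
    constructor
    · rintro ⟨hd, hne⟩
      exact ⟨⟨Nat.pos_of_dvd_of_pos hd (by omega), le_trans (Nat.le_of_dvd (by omega) hd) hℓ.2⟩, hd⟩
    · rintro ⟨⟨h1, _⟩, hd⟩
      exact ⟨hd, by omega⟩
  calc ∏ ℓ ∈ Finset.Icc 1 k, (cyclotomic ℓ ℤ) ^ (k / ℓ)
      = ∏ ℓ ∈ Finset.Icc 1 k, ∏ _m ∈ {m ∈ Finset.Icc 1 k | ℓ ∣ m}, cyclotomic ℓ ℤ := by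
        apply Finset.prod_congr rfl
        intro ℓ hℓ
        rw [Finset.prod_const, show Icc 1 k = Icc (0 + 1) k from rfl, Finset.Icc_add_one_left_eq_Ioc, Nat.Ioc_filter_dvd_card_eq_div]
    _ = ∏ m ∈ Finset.Icc 1 k, ∏ ℓ ∈ {ℓ ∈ Finset.Icc 1 k | ℓ ∣ m}, cyclotomic ℓ ℤ := by
        rw [Finset.prod_comm' (t' := Finset.Icc 1 k)]
        intro x y
        simp only [Finset.mem_filter]
        tauto
    _ = ∏ m ∈ Finset.Icc 1 k, ((X : ℤ[X]) ^ m - 1) := by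
        apply Finset.prod_congr rfl
        intro m hm
        rw [← hdiv m hm,
          Polynomial.prod_cyclotomic_eq_X_pow_sub_one
            (by simp only [Finset.mem_Icc] at hm; omega)]

lemma Icc_to_Q (n k : ℕ) (h : k ≤ n) :
    ∏ ℓ ∈ Finset.Icc 1 k, ((X : ℤ[X]) ^ (n - ℓ + 1) - 1) = Q n k := by
  rw [← Finset.Ico_add_one_right_eq_Icc, Finset.prod_Ico_eq_prod_range]
  apply Finset.prod_congr (by simp)
  intro i hi
  simp only [Finset.mem_range] at hi
  congr 2
  omega

lemma Icc_to_Rk (k : ℕ) :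
    ∏ ℓ ∈ Finset.Icc 1 k, ((X : ℤ[X]) ^ ℓ - 1) = Rk k := by
  rw [← Finset.Ico_add_one_right_eq_Icc, Finset.prod_Ico_eq_prod_range]
  apply Finset.prod_congr (by simp)
  intro i _
  rw [add_comm]

theorem esymm_geometric_closed_form (n k : ℕ) (hk1 : 1 ≤ k) (hkn : k ≤ n) :
    (((Multiset.range n).map fun i => (X : ℤ[X]) ^ i).esymm k) *
        ∏ ℓ ∈ Finset.Icc 1 k, (cyclotomic ℓ ℤ) ^ (k / ℓ) =
      X ^ (k * (k - 1) / 2) * ∏ ℓ ∈ Finset.Icc 1 k, ((X : ℤ[X]) ^ (n - ℓ + 1) - 1) := by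
  rw [cyc_prod, Icc_to_Q n k hkn, Icc_to_Rk]
  exact key n k hkn
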